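/- Let x ∈ ℝ^m and x' ∈ ℝ^{m'} be time series with set(x) = set(x') and the same set of ℓ-profiles, i.e., D_{(x,ℓ)} = D_{(x',ℓ)}. Then for every y ∈ ℝ^ℓ, d_dF(x,y) = d_dF(x',y). -/

import Mathlib

open scoped Classical

/-- A single step of a traversal: increment first, second, or both coordinates by 1. -/
def IsStep (p q : ℕ × ℕ) : Prop :=
  (q.1 = p.1 + 1 ∧ q.2 = p.2) ∨ (q.1 = p.1 ∧ q.2 = p.2 + 1) ∨
    (q.1 = p.1 + 1 ∧ q.2 = p.2 + 1)

/-- A traversal of `[m] × [ℓ]`: a sequence of index pairs starting at `(1,1)`,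
ending at `(m,ℓ)`, where consecutive pairs differ by a valid step. -/
def IsTraversal (m ℓ : ℕ) (T : List (ℕ × ℕ)) : Prop :=
  T.head? = some (1, 1) ∧ T.getLast? = some (m, ℓ) ∧ T.Chain' IsStep

/-- The cost of a traversal: the maximum of `|x i - y j|` over pairs `(i,j)` in `T`. -/
noncomputable def travCost (x y : ℕ → ℝ) (T : List (ℕ × ℕ)) : ℝ :=
  (T.map (fun p => |x p.1 - y p.2|)).foldr max 0

/-- The discrete Fréchet distance between time series `x ∈ ℝ^m` and `y ∈ ℝ^ℓ`
(indexed by `1,…,m` and `1,…,ℓ` respectively). -/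
noncomputable def dF (m ℓ : ℕ) (x y : ℕ → ℝ) : ℝ :=
  sInf {c | ∃ T, IsTraversal m ℓ T ∧ travCost x y T = c}

/-- The traversal sector of index `j`: the set of values of `x` matched to `j` by `T`. -/
def sectorVals (x : ℕ → ℝ) (T : List (ℕ × ℕ)) (j : ℕ) : Set ℝ :=
  {v | ∃ i, (i, j) ∈ T ∧ x i = v}

/-- The rank of `z` among the distinct values of `x` (indices `1,…,m`). -/
noncomputable def rnk (m : ℕ) (x : ℕ → ℝ) (z : ℝ) : ℕ :=
  (((Finset.Icc 1 m).image x).filter (fun w => w ≤ z)).card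

/-- The ℓ-profile of `(x,T)`: the sequence of pairs of ranks of the minimum and
maximum value in each traversal sector. -/
noncomputable def profileOf (m ℓ : ℕ) (x : ℕ → ℝ) (T : List (ℕ × ℕ)) : List (ℕ × ℕ) :=
  (List.range ℓ).map (fun j =>
    (rnk m x (sInf (sectorVals x T (j + 1))), rnk m x (sSup (sectorVals x T (j + 1)))))

/-- The set of all ℓ-profiles of `x` over all traversals. -/
noncomputable def profileSet (m ℓ : ℕ) (x : ℕ → ℝ) : Set (List (ℕ × ℕ)) :=
  {p | ∃ T, IsTraversal m ℓ T ∧ p = profileOf m ℓ x T}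

/-! ### Auxiliary definitions and lemmas -/

/-- The value in `S` having a given rank (0 if none). -/
noncomputable def valOf (S : Finset ℝ) (r : ℕ) : ℝ :=
  if h : ∃ z ∈ S, (S.filter (fun w => w ≤ z)).card = r then h.choose else 0

lemma rnkS_lt (S : Finset ℝ) {u v : ℝ} (hv : v ∈ S) (huv : u < v) :
    (S.filter (fun w => w ≤ u)).card < (S.filter (fun w => w ≤ v)).card := by
  apply Finset.card_lt_card
  constructor
  · intro w hw
    simp only [Finset.mem_filter] at hw ⊢
    exact ⟨hw.1, hw.2.trans huv.le⟩
  · intro hc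
    have := hc (Finset.mem_filter.mpr ⟨hv, le_refl v⟩)
    simp only [Finset.mem_filter] at this
    exact absurd this.2 (not_le.mpr huv)

lemma rnkS_injOn (S : Finset ℝ) {z1 z2 : ℝ} (h1 : z1 ∈ S) (h2 : z2 ∈ S)
    (h : (S.filter (fun w => w ≤ z1)).card = (S.filter (fun w => w ≤ z2)).card) :
    z1 = z2 := by
  by_contra hne
  rcases lt_or_gt_of_ne hne with hlt | hlt
  · exact absurd h (rnkS_lt S h2 hlt).ne
  · exact absurd h.symm (rnkS_lt S h1 hlt).ne

lemma valOf_rnkS (S : Finset ℝ) {z : ℝ} (hz : z ∈ S) :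
    valOf S ((S.filter (fun w => w ≤ z)).card) = z := by
  have h : ∃ z' ∈ S, (S.filter (fun w => w ≤ z')).card
      = (S.filter (fun w => w ≤ z)).card := ⟨z, hz, rfl⟩
  rw [valOf, dif_pos h]
  exact rnkS_injOn S h.choose_spec.1 hz h.choose_spec.2

/-- Cost computed from a profile, the common value set and `y`. -/
noncomputable def costP (S : Finset ℝ) (y : ℕ → ℝ) (p : List (ℕ × ℕ)) : ℝ :=
  ((List.range p.length).map (fun j =>
    max |valOf S (p.getD j (0, 0)).1 - y (j + 1)|
        |valOf S (p.getD j (0, 0)).2 - y (j + 1)|)).foldr max 0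

lemma lmax_nonneg (l : List ℝ) : 0 ≤ l.foldr max 0 := by
  induction l with
  | nil => simp
  | cons a t ih => exact le_trans ih (le_max_right _ _)

lemma le_lmax {l : List ℝ} {a : ℝ} (h : a ∈ l) : a ≤ l.foldr max 0 := by
  induction l with
  | nil => simp at h
  | cons b t ih =>
    rcases List.mem_cons.mp h with rfl | h
    · exact le_max_left _ _
    · exact le_trans (ih h) (le_max_right _ _)

lemma lmax_le {l : List ℝ} {c : ℝ} (hc : 0 ≤ c) (h : ∀ a ∈ l, a ≤ c) :
    l.foldr max 0 ≤ c := by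
  induction l with
  | nil => simpa
  | cons b t ih =>
    exact max_le (h b (List.mem_cons_self)) (ih fun a ha => h a (List.mem_cons_of_mem _ ha))

lemma abs_mid {a b t c : ℝ} (h1 : a ≤ t) (h2 : t ≤ b) :
    |t - c| ≤ max |a - c| |b - c| := by
  rcases le_total t c with h | h
  · refine le_max_of_le_left ?_
    rw [abs_of_nonpos (by linarith)]
    have : c - a ≤ |a - c| := by rw [abs_sub_comm]; exact le_abs_self _
    linarith
  · refine le_max_of_le_right ?_
    rw [abs_of_nonneg (by linarith)]
    have := le_abs_self (b - c)
    linarith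

/-- Componentwise monotonicity along a chain of steps. -/
lemma chain_le : ∀ (T : List (ℕ × ℕ)), T.Chain' IsStep → ∀ a c : ℕ × ℕ,
    T.head? = some a → T.getLast? = some c → ∀ p ∈ T,
    a.1 ≤ p.1 ∧ a.2 ≤ p.2 ∧ p.1 ≤ c.1 ∧ p.2 ≤ c.2 := by
  intro T
  induction T with
  | nil => intro _ a c h; simp at h
  | cons q rest ih =>
    intro hch a c hh hl p hp
    simp only [List.head?_cons, Option.some.injEq] at hh
    subst hh
    cases rest with
    | nil =>
      simp only [List.getLast?_singleton, Option.some.injEq] at hl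
      subst hl
      simp only [List.mem_singleton] at hp
      subst hp
      omega
    | cons r rest' =>
      have hstep : IsStep q r := (List.isChain_cons_cons.mp hch).1
      have hch' : (r :: rest').Chain' IsStep := (List.isChain_cons_cons.mp hch).2
      have hl' : (r :: rest').getLast? = some c := by
        rwa [List.getLast?_cons_cons] at hl
      have har : q.1 ≤ r.1 ∧ q.2 ≤ r.2 := by
        rcases hstep with ⟨h1, h2⟩ | ⟨h1, h2⟩ | ⟨h1, h2⟩ <;> omega
      rcases List.mem_cons.mp hp with rfl | hp'
      · have := ih hch' r c rfl hl' r (List.mem_cons_self)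
        omega
      · have := ih hch' r c rfl hl' p hp'
        omega

/-- Every second coordinate between the endpoints is attained. -/
lemma chain_hits : ∀ (T : List (ℕ × ℕ)), T.Chain' IsStep → ∀ a c : ℕ × ℕ,
    T.head? = some a → T.getLast? = some c → ∀ j, a.2 ≤ j → j ≤ c.2 →
    ∃ i, (i, j) ∈ T := by
  intro T
  induction T with
  | nil => intro _ a c h; simp at h
  | cons q rest ih =>
    intro hch a c hh hl j hj1 hj2
    simp only [List.head?_cons, Option.some.injEq] at hh
    subst hh
    cases rest with
    | nil =>
      simp only [List.getLast?_singleton, Option.some.injEq] at hl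
      subst hl
      have : j = q.2 := le_antisymm hj2 hj1
      exact ⟨q.1, by simp [this]⟩
    | cons r rest' =>
      have hstep : IsStep q r := (List.isChain_cons_cons.mp hch).1
      have hch' : (r :: rest').Chain' IsStep := (List.isChain_cons_cons.mp hch).2
      have hl' : (r :: rest').getLast? = some c := by
        rwa [List.getLast?_cons_cons] at hl
      rcases eq_or_lt_of_le hj1 with h | h
      · exact ⟨q.1, by simp [← h]⟩
      · have hr2 : r.2 ≤ j := by
          rcases hstep with ⟨h1, h2⟩ | ⟨h1, h2⟩ | ⟨h1, h2⟩ <;> omega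
        obtain ⟨i, hi⟩ := ih hch' r c rfl hl' j hr2 hj2
        exact ⟨i, List.mem_cons_of_mem _ hi⟩

lemma sector_subset {m ℓ : ℕ} {x : ℕ → ℝ} {T : List (ℕ × ℕ)}
    (hT : IsTraversal m ℓ T) (j : ℕ) :
    sectorVals x T j ⊆ ↑((Finset.Icc 1 m).image x) := by
  rintro v ⟨i, hiT, rfl⟩
  obtain ⟨h1, h2, h3⟩ := hT
  have := chain_le T h3 _ _ h1 h2 (i, j) hiT
  simp only [Finset.coe_image, Set.mem_image, Finset.mem_coe, Finset.mem_Icc]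
  exact ⟨i, by omega, rfl⟩

lemma sector_nonempty {m ℓ : ℕ} {x : ℕ → ℝ} {T : List (ℕ × ℕ)}
    (hT : IsTraversal m ℓ T) {j : ℕ} (hj1 : 1 ≤ j) (hj2 : j ≤ ℓ) :
    (sectorVals x T j).Nonempty := by
  obtain ⟨h1, h2, h3⟩ := hT
  obtain ⟨i, hi⟩ := chain_hits T h3 _ _ h1 h2 j hj1 hj2
  exact ⟨x i, i, hi, rfl⟩

/-- The key lemma: the traversal cost only depends on the profile, the value
set and `y`. -/
lemma travCost_eq_costP (m ℓ : ℕ) (x y : ℕ → ℝ) (T : List (ℕ × ℕ))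
    (hT : IsTraversal m ℓ T) :
    travCost x y T = costP ((Finset.Icc 1 m).image x) y (profileOf m ℓ x T) := by
  set S := (Finset.Icc 1 m).image x with hS
  set p := profileOf m ℓ x T with hp
  have hplen : p.length = ℓ := by simp [hp, profileOf]
  have hgetD : ∀ j < ℓ, p.getD j (0, 0) =
      (rnk m x (sInf (sectorVals x T (j + 1))), rnk m x (sSup (sectorVals x T (j + 1)))) := by
    intro j hj
    simp [hp, profileOf, List.getD, List.getElem?_range, hj]
  have hsecsub : ∀ j, sectorVals x T j ⊆ ↑S := fun j => sector_subset hT j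
  have hsecfin : ∀ j, (sectorVals x T j).Finite :=
    fun j => Set.Finite.subset S.finite_toSet (hsecsub j)
  have hsecne : ∀ j < ℓ, (sectorVals x T (j + 1)).Nonempty :=
    fun j hj => sector_nonempty hT (by omega) (by omega)
  have hinf_mem : ∀ j < ℓ, sInf (sectorVals x T (j + 1)) ∈ sectorVals x T (j + 1) :=
    fun j hj => (hsecne j hj).csInf_mem (hsecfin _)
  have hsup_mem : ∀ j < ℓ, sSup (sectorVals x T (j + 1)) ∈ sectorVals x T (j + 1) :=
    fun j hj => (hsecne j hj).csSup_mem (hsecfin _)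
  have hval : ∀ z ∈ S, valOf S (rnk m x z) = z := by
    intro z hz
    exact valOf_rnkS S hz
  -- the entries of the costP list
  have hentry : ∀ j < ℓ,
      (max |valOf S (p.getD j (0, 0)).1 - y (j + 1)| |valOf S (p.getD j (0, 0)).2 - y (j + 1)|)
      = max |sInf (sectorVals x T (j + 1)) - y (j + 1)|
            |sSup (sectorVals x T (j + 1)) - y (j + 1)| := by
    intro j hj
    rw [hgetD j hj]
    rw [hval _ (hsecsub _ (hinf_mem j hj)), hval _ (hsecsub _ (hsup_mem j hj))]
  apply le_antisymm
  · -- travCost ≤ costP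
    apply lmax_le (lmax_nonneg _)
    intro a ha
    rw [List.mem_map] at ha
    obtain ⟨q, hqT, rfl⟩ := ha
    obtain ⟨h1, h2, h3⟩ := hT
    have hb := chain_le T h3 _ _ h1 h2 q hqT
    set j := q.2 - 1 with hj
    have hq2 : q.2 = j + 1 := by omega
    have hjl : j < ℓ := by omega
    have hmemsec : x q.1 ∈ sectorVals x T (j + 1) := ⟨q.1, by rw [← hq2]; exact hqT, rfl⟩
    have hlow : sInf (sectorVals x T (j + 1)) ≤ x q.1 :=
      csInf_le (hsecfin _).bddBelow hmemsec
    have hhigh : x q.1 ≤ sSup (sectorVals x T (j + 1)) :=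
      le_csSup (hsecfin _).bddAbove hmemsec
    have hmem2 : (max |valOf S (p.getD j (0, 0)).1 - y (j + 1)|
          |valOf S (p.getD j (0, 0)).2 - y (j + 1)|) ∈
        ((List.range p.length).map (fun j =>
          max |valOf S (p.getD j (0, 0)).1 - y (j + 1)|
              |valOf S (p.getD j (0, 0)).2 - y (j + 1)|)) := by
      apply List.mem_map_of_mem
      rw [List.mem_range, hplen]
      exact hjl
    refine le_trans ?_ (le_lmax hmem2)
    rw [hentry j hjl, hq2]
    exact abs_mid hlow hhigh
  · -- costP ≤ travCost
    apply lmax_le (lmax_nonneg _)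
    intro a ha
    rw [List.mem_map] at ha
    obtain ⟨j, hjmem, rfl⟩ := ha
    rw [List.mem_range, hplen] at hjmem
    rw [hentry j hjmem]
    obtain ⟨i1, hi1, he1⟩ := hinf_mem j hjmem
    obtain ⟨i2, hi2, he2⟩ := hsup_mem j hjmem
    apply max_le
    · rw [← he1]
      exact le_lmax (List.mem_map_of_mem hi1)
    · rw [← he2]
      exact le_lmax (List.mem_map_of_mem hi2)

/-- Two time series with the same value set and the same set of ℓ-profiles are
at the same discrete Fréchet distance to every complexity-ℓ series. -/
theorem stmt8 (m m' ℓ : ℕ) (hm : 1 ≤ m) (hm' : 1 ≤ m') (hl : 1 ≤ ℓ)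
    (x x' : ℕ → ℝ)
    (hset : (Finset.Icc 1 m).image x = (Finset.Icc 1 m').image x')
    (hprof : profileSet m ℓ x = profileSet m' ℓ x') :
    ∀ y : ℕ → ℝ, dF m ℓ x y = dF m' ℓ x' y := by
  intro y
  have key : ∀ (n : ℕ) (z : ℕ → ℝ),
      {c | ∃ T, IsTraversal n ℓ T ∧ travCost z y T = c}
      = costP ((Finset.Icc 1 n).image z) y '' profileSet n ℓ z := by
    intro n z
    ext c
    constructor
    · rintro ⟨T, hT, rfl⟩
      exact ⟨profileOf n ℓ z T, ⟨T, hT, rfl⟩, (travCost_eq_costP n ℓ z y T hT).symm⟩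
    · rintro ⟨q, ⟨T, hT, rfl⟩, rfl⟩
      exact ⟨T, hT, travCost_eq_costP n ℓ z y T hT⟩
  unfold dF
  rw [key m x, key m' x', hset, hprof]
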